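/- The scalar function V(z) = 1 + z - i·tanh(izl/2), for fixed l > 0, is a Herglotz-Nevanlinna function: it is holomorphic off ℝ, satisfies V(z̄) = conj(V(z)), and Im V(z) ≥ 0 for Im z > 0. -/

import Mathlib

lemma my_sinh_re (w : ℂ) : (Complex.sinh w).re = Real.sinh w.re * Real.cos w.im := by
  conv_lhs => rw [← Complex.re_add_im w]
  rw [Complex.sinh_add, Complex.sinh_mul_I, Complex.cosh_mul_I,
    ← Complex.ofReal_sinh, ← Complex.ofReal_cosh, ← Complex.ofReal_sin, ← Complex.ofReal_cos]
  simp only [Complex.add_re, Complex.mul_re, Complex.ofReal_re, Complex.ofReal_im,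
    Complex.I_re, Complex.I_im, Complex.mul_im]
  ring

lemma my_sinh_im (w : ℂ) : (Complex.sinh w).im = Real.cosh w.re * Real.sin w.im := by
  conv_lhs => rw [← Complex.re_add_im w]
  rw [Complex.sinh_add, Complex.sinh_mul_I, Complex.cosh_mul_I,
    ← Complex.ofReal_sinh, ← Complex.ofReal_cosh, ← Complex.ofReal_sin, ← Complex.ofReal_cos]
  simp only [Complex.add_re, Complex.mul_re, Complex.ofReal_re, Complex.ofReal_im,
    Complex.I_re, Complex.I_im, Complex.mul_im, Complex.add_im]
  ring

lemma my_cosh_re (w : ℂ) : (Complex.cosh w).re = Real.cosh w.re * Real.cos w.im := by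
  conv_lhs => rw [← Complex.re_add_im w]
  rw [Complex.cosh_add, Complex.sinh_mul_I, Complex.cosh_mul_I,
    ← Complex.ofReal_sinh, ← Complex.ofReal_cosh, ← Complex.ofReal_sin, ← Complex.ofReal_cos]
  simp only [Complex.add_re, Complex.mul_re, Complex.ofReal_re, Complex.ofReal_im,
    Complex.I_re, Complex.I_im, Complex.mul_im]
  ring

lemma my_cosh_im (w : ℂ) : (Complex.cosh w).im = Real.sinh w.re * Real.sin w.im := by
  conv_lhs => rw [← Complex.re_add_im w]
  rw [Complex.cosh_add, Complex.sinh_mul_I, Complex.cosh_mul_I,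
    ← Complex.ofReal_sinh, ← Complex.ofReal_cosh, ← Complex.ofReal_sin, ← Complex.ofReal_cos]
  simp only [Complex.add_re, Complex.mul_re, Complex.ofReal_re, Complex.ofReal_im,
    Complex.I_re, Complex.I_im, Complex.mul_im, Complex.add_im]
  ring

lemma my_cosh_ne_zero (w : ℂ) (hw : w.re ≠ 0) : Complex.cosh w ≠ 0 := by
  intro h
  have hre : Real.cosh w.re * Real.cos w.im = 0 := by
    rw [← my_cosh_re, h]; simp
  have him : Real.sinh w.re * Real.sin w.im = 0 := by
    rw [← my_cosh_im, h]; simp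
  have hch : Real.cosh w.re ≠ 0 := ne_of_gt (Real.cosh_pos w.re)
  have hcos : Real.cos w.im = 0 := by
    rcases mul_eq_zero.1 hre with h1 | h1
    · exact absurd h1 hch
    · exact h1
  have hsin : Real.sin w.im ≠ 0 := by
    intro hs
    have := Real.sin_sq_add_cos_sq w.im
    rw [hs, hcos] at this; norm_num at this
  have hsh : Real.sinh w.re = 0 := by
    rcases mul_eq_zero.1 him with h1 | h1
    · exact h1
    · exact absurd h1 hsin
  exact hw (Real.sinh_eq_zero.1 hsh)

lemma my_tanh_re_nonpos (w : ℂ) (hw : w.re ≤ 0) : (Complex.tanh w).re ≤ 0 := by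
  rw [Complex.tanh_eq_sinh_div_cosh, Complex.div_re, my_sinh_re, my_sinh_im,
    my_cosh_re, my_cosh_im]
  have h1 : Real.sinh w.re * Real.cos w.im * (Real.cosh w.re * Real.cos w.im)
      + Real.cosh w.re * Real.sin w.im * (Real.sinh w.re * Real.sin w.im)
      = Real.sinh w.re * Real.cosh w.re * (Real.sin w.im ^ 2 + Real.cos w.im ^ 2) := by
    ring
  have hnum : Real.sinh w.re * Real.cosh w.re ≤ 0 :=
    mul_nonpos_of_nonpos_of_nonneg (Real.sinh_nonpos_iff.mpr hw) (Real.cosh_pos w.re).le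
  have hsq : (0:ℝ) ≤ Complex.normSq (Complex.cosh w) := Complex.normSq_nonneg _
  have : Real.sinh w.re * Real.cos w.im * (Real.cosh w.re * Real.cos w.im) /
        Complex.normSq (Complex.cosh w)
      + Real.cosh w.re * Real.sin w.im * (Real.sinh w.re * Real.sin w.im) /
        Complex.normSq (Complex.cosh w)
      = Real.sinh w.re * Real.cosh w.re / Complex.normSq (Complex.cosh w) := by
    rw [← add_div, h1, Real.sin_sq_add_cos_sq, mul_one]
  rw [this]
  exact div_nonpos_of_nonpos_of_nonneg hnum hsq

theorem stmt_17 (l : ℝ) (hl : 0 < l)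
    (V : ℂ → ℂ)
    (hV : V = fun z => 1 + z - Complex.I * Complex.tanh (Complex.I * z * l / 2)) :
    ∀ z : ℂ, z.im ≠ 0 →
      DifferentiableAt ℂ V z ∧
      V (starRingEnd ℂ z) = starRingEnd ℂ (V z) ∧
      (0 < z.im → 0 ≤ (V z).im) := by
  intro z hz
  have hwre : ∀ u : ℂ, (Complex.I * u * l / 2).re = -(u.im * l) / 2 := by
    intro u; simp [Complex.div_re, Complex.mul_re, Complex.mul_im]; try ring
  have hne : Complex.cosh (Complex.I * z * l / 2) ≠ 0 := by
    apply my_cosh_ne_zero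
    rw [hwre]
    simp only [ne_eq, div_eq_zero_iff, neg_eq_zero, mul_eq_zero]
    push_neg
    exact ⟨⟨hz, ne_of_gt hl⟩, by norm_num⟩
  refine ⟨?_, ?_, ?_⟩
  · -- differentiability
    rw [hV]
    have hg : DifferentiableAt ℂ (fun u : ℂ => Complex.I * u * l / 2) z := by
      fun_prop
    have hsinh : DifferentiableAt ℂ (fun u : ℂ => Complex.sinh (Complex.I * u * l / 2)) z :=
      Complex.differentiable_sinh.differentiableAt.comp z hg
    have hcosh : DifferentiableAt ℂ (fun u : ℂ => Complex.cosh (Complex.I * u * l / 2)) z :=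
      Complex.differentiable_cosh.differentiableAt.comp z hg
    have htanh : DifferentiableAt ℂ (fun u : ℂ => Complex.tanh (Complex.I * u * l / 2)) z := by
      have := hsinh.div hcosh hne
      simpa only [Complex.tanh_eq_sinh_div_cosh, Pi.div_def] using this
    exact ((differentiableAt_const _).add differentiableAt_fun_id).sub
      ((differentiableAt_const _).mul htanh)
  · -- symmetry
    rw [hV]
    simp only
    have harg : Complex.I * (starRingEnd ℂ z) * l / 2
        = -(starRingEnd ℂ (Complex.I * z * l / 2)) := by
      simp only [map_div₀, map_mul, Complex.conj_I, Complex.conj_ofNat]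
      rw [show (starRingEnd ℂ) (l : ℂ) = (l : ℂ) from Complex.conj_ofReal l]
      ring
    rw [harg, Complex.tanh_neg, Complex.tanh_conj]
    simp only [map_sub, map_add, map_one, map_mul, Complex.conj_I]
    ring
  · -- imaginary part
    intro hzpos
    rw [hV]
    simp only [Complex.sub_im, Complex.add_im, Complex.one_im, Complex.mul_im,
      Complex.I_re, Complex.I_im, zero_mul, one_mul, zero_add]
    have hre : (Complex.tanh (Complex.I * z * l / 2)).re ≤ 0 := by
      apply my_tanh_re_nonpos
      rw [hwre]
      apply div_nonpos_of_nonpos_of_nonneg _ (by norm_num)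
      simp only [neg_nonpos]
      positivity
    linarith
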